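/- For jointly distributed finite random variables $V_0, V_1, V_2, X, Y_2$ such that $(V_0,V_1,V_2) \leftrightarrow X \leftrightarrow Y_2$ form a Markov chain, we have $I(X;Y_2\mid V_0,V_1) \geq I(V_2;Y_2\mid V_0) - I(V_1;V_2\mid V_0)$. -/

import Mathlib

open Finset Real

namespace IT

variable {Ω : Type} [Fintype Ω]

/-- Distribution (pushforward pmf) of a random variable `X` under pmf `p`. -/
noncomputable def pm {α : Type} [Fintype α] [DecidableEq α]
    (p : Ω → ℝ) (X : Ω → α) : α → ℝ :=
  fun a => ∑ ω, if X ω = a then p ω else 0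

/-- Shannon entropy (in nats) of a pmf `q` on a finite alphabet. -/
noncomputable def ent {α : Type} [Fintype α] (q : α → ℝ) : ℝ :=
  -∑ a, q a * Real.log (q a)

/-- Entropy of a random variable. -/
noncomputable def H {α : Type} [Fintype α] [DecidableEq α]
    (p : Ω → ℝ) (X : Ω → α) : ℝ :=
  ent (pm p X)

/-- Mutual information `I(X;Y)`. -/
noncomputable def I2 {α β : Type} [Fintype α] [DecidableEq α] [Fintype β] [DecidableEq β]
    (p : Ω → ℝ) (X : Ω → α) (Y : Ω → β) : ℝ :=
  H p X + H p Y - H p (fun ω => (X ω, Y ω))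

/-- Conditional entropy `H(X∣Y)`. -/
noncomputable def cH {α β : Type} [Fintype α] [DecidableEq α] [Fintype β] [DecidableEq β]
    (p : Ω → ℝ) (X : Ω → α) (Y : Ω → β) : ℝ :=
  H p (fun ω => (X ω, Y ω)) - H p Y

/-- Conditional mutual information `I(X;Y∣Z)`. -/
noncomputable def cI {α β γ : Type} [Fintype α] [DecidableEq α] [Fintype β] [DecidableEq β]
    [Fintype γ] [DecidableEq γ]
    (p : Ω → ℝ) (X : Ω → α) (Y : Ω → β) (Z : Ω → γ) : ℝ :=
  cH p X Z + cH p Y Z - cH p (fun ω => (X ω, Y ω)) Z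

/-- `p` is a probability mass function. -/
def IsPMF (p : Ω → ℝ) : Prop :=
  (∀ ω, 0 ≤ p ω) ∧ ∑ ω, p ω = 1

/-- `X` and `Y` are conditionally independent given `Z` (Markov chain `X ↔ Z ↔ Y`). -/
def CondIndep {α β γ : Type} [Fintype α] [DecidableEq α] [Fintype β] [DecidableEq β]
    [Fintype γ] [DecidableEq γ]
    (p : Ω → ℝ) (X : Ω → α) (Y : Ω → β) (Z : Ω → γ) : Prop :=
  ∀ x y z,
    pm p (fun ω => ((X ω, Y ω), Z ω)) ((x, y), z) * pm p Z z
      = pm p (fun ω => (X ω, Z ω)) (x, z) * pm p (fun ω => (Y ω, Z ω)) (y, z)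

end IT

namespace ITAux
open IT

set_option linter.unusedSectionVars false

variable {Ω : Type} [Fintype Ω]
variable {α β γ : Type} [Fintype α] [DecidableEq α] [Fintype β] [DecidableEq β]
  [Fintype γ] [DecidableEq γ]

lemma pm_nonneg (p : Ω → ℝ) (hp : ∀ ω, 0 ≤ p ω) (X : Ω → α) (a : α) : 0 ≤ pm p X a := by
  unfold pm
  refine Finset.sum_nonneg fun ω _ => ?_
  split <;> simp [hp ω]

lemma pm_sum (p : Ω → ℝ) (X : Ω → α) : ∑ a, pm p X a = ∑ ω, p ω := by
  unfold pm
  rw [Finset.sum_comm]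
  exact Finset.sum_congr rfl fun ω _ => by simp

lemma pm_comp (p : Ω → ℝ) (X : Ω → α) (f : α → β) :
    pm p (fun ω => f (X ω)) = pm (pm p X) f := by
  funext b
  unfold pm
  have h : ∀ a : α, (if f a = b then (∑ ω, if X ω = a then p ω else 0) else 0)
      = ∑ ω, if f a = b then (if X ω = a then p ω else 0) else 0 := by
    intro a; split <;> simp
  simp_rw [h]
  rw [Finset.sum_comm]
  refine Finset.sum_congr rfl fun ω _ => ?_
  rw [Finset.sum_eq_single (X ω)]
  · simp
  · intro a _ ha; split <;> simp [Ne.symm ha]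
  · simp

lemma le_pm (q : α → ℝ) (h0 : ∀ a, 0 ≤ q a) (f : α → β) (a : α) :
    q a ≤ pm q f (f a) := by
  unfold pm
  refine le_trans ?_ (Finset.single_le_sum (f := fun a' => if f a' = f a then q a' else 0)
    (fun a' _ => by split <;> simp [h0 a']) (Finset.mem_univ a))
  simp

lemma sum_pm_mul (q : α → ℝ) (g : α → γ) (F : γ → ℝ) :
    ∑ c, pm q g c * F c = ∑ a, q a * F (g a) := by
  unfold pm
  simp_rw [Finset.sum_mul]
  rw [Finset.sum_comm]
  refine Finset.sum_congr rfl fun a _ => ?_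
  rw [Finset.sum_eq_single (g a)]
  · simp
  · intro c _ hc; simp [Ne.symm hc]
  · simp

lemma ent_pm_eq (q : α → ℝ) (g : α → γ) :
    ent (pm q g) = -∑ a, q a * Real.log (pm q g (g a)) := by
  unfold ent
  rw [sum_pm_mul q g (fun c => Real.log (pm q g c))]

lemma ent_pm_of_injective (q : α → ℝ) (f : α → β) (hf : Function.Injective f) :
    ent (pm q f) = ent q := by
  have hfa : ∀ a, pm q f (f a) = q a := by
    intro a; unfold pm
    rw [Finset.sum_eq_single a]
    · simp
    · intro a' _ ha; simp [hf.ne ha]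
    · simp
  unfold ent
  congr 1
  have h2 : ∑ b ∈ Finset.image f Finset.univ, pm q f b * Real.log (pm q f b)
      = ∑ a, pm q f (f a) * Real.log (pm q f (f a)) :=
    Finset.sum_image (fun a _ a' _ h => hf h)
  rw [show (∑ a : α, q a * Real.log (q a))
      = ∑ a : α, pm q f (f a) * Real.log (pm q f (f a)) from
    Finset.sum_congr rfl fun a _ => by rw [hfa], ← h2]
  symm
  refine Finset.sum_subset (Finset.subset_univ _) fun b _ hb => ?_
  have : pm q f b = 0 := by
    unfold pm
    refine Finset.sum_eq_zero fun a _ => ?_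
    have : f a ≠ b := fun h => hb (Finset.mem_image.mpr ⟨a, Finset.mem_univ a, h⟩)
    simp [this]
  simp [this]

lemma H_relabel (p : Ω → ℝ) (X : Ω → α) (f : α → β) (hf : Function.Injective f) :
    H p (fun ω => f (X ω)) = H p X := by
  unfold H
  rw [pm_comp]
  exact ent_pm_of_injective _ _ hf

lemma marg_fst (q : (α × β) × γ → ℝ) (c : γ) :
    ∑ a, pm q (fun t => (t.1.1, t.2)) (a, c) = pm q (fun t => t.2) c := by
  unfold pm
  rw [Finset.sum_comm]
  refine Finset.sum_congr rfl fun t _ => ?_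
  rw [Finset.sum_eq_single t.1.1]
  · simp
  · intro a _ ha; simp [Ne.symm ha]
  · simp

lemma marg_snd (q : (α × β) × γ → ℝ) (c : γ) :
    ∑ b, pm q (fun t => (t.1.2, t.2)) (b, c) = pm q (fun t => t.2) c := by
  unfold pm
  rw [Finset.sum_comm]
  refine Finset.sum_congr rfl fun t _ => ?_
  rw [Finset.sum_eq_single t.1.2]
  · simp
  · intro b _ hb; simp [Ne.symm hb]
  · simp

lemma ent_decomp (q : (α × β) × γ → ℝ) :
    ent (pm q fun t => (t.1.1, t.2)) + ent (pm q fun t => (t.1.2, t.2))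
      - ent q - ent (pm q fun t => t.2)
    = ∑ t, q t * (Real.log (q t) + Real.log (pm q (fun t => t.2) t.2)
        - Real.log (pm q (fun t => (t.1.1, t.2)) (t.1.1, t.2))
        - Real.log (pm q (fun t => (t.1.2, t.2)) (t.1.2, t.2))) := by
  rw [ent_pm_eq q (fun t => (t.1.1, t.2)), ent_pm_eq q (fun t => (t.1.2, t.2)),
    ent_pm_eq q (fun t => t.2)]
  unfold ent
  simp only [mul_add, mul_sub]
  rw [Finset.sum_sub_distrib, Finset.sum_sub_distrib, Finset.sum_add_distrib]
  ring

lemma sum_ratio_le_one (q : (α × β) × γ → ℝ) (h0 : ∀ t, 0 ≤ q t) (h1 : ∑ t, q t = 1) :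
    ∑ t : (α × β) × γ, pm q (fun t => (t.1.1, t.2)) (t.1.1, t.2)
        * pm q (fun t => (t.1.2, t.2)) (t.1.2, t.2) / pm q (fun t => t.2) t.2 ≤ 1 := by
  have hC : ∀ c, 0 ≤ pm q (fun t => t.2) c := pm_nonneg q h0 _
  have hfc : ∀ c, (∑ ab : α × β, pm q (fun t => (t.1.1, t.2)) (ab.1, c)
      * pm q (fun t => (t.1.2, t.2)) (ab.2, c) / pm q (fun t => t.2) c)
      ≤ pm q (fun t => t.2) c := by
    intro c
    have : (∑ ab : α × β, pm q (fun t => (t.1.1, t.2)) (ab.1, c)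
        * pm q (fun t => (t.1.2, t.2)) (ab.2, c) / pm q (fun t => t.2) c)
        = (pm q (fun t => t.2) c) * (pm q (fun t => t.2) c) / pm q (fun t => t.2) c := by
      have gen : ∀ (u : α → ℝ) (v : β → ℝ) (s : ℝ),
          ∑ ab : α × β, u ab.1 * v ab.2 / s = (∑ a, u a) * (∑ b, v b) / s := by
        intro u v s
        rw [Fintype.sum_prod_type]
        simp_rw [div_eq_mul_inv, mul_assoc, ← Finset.mul_sum]
        rw [← Finset.sum_mul, ← Finset.sum_mul]
      rw [gen (fun a => pm q (fun t => (t.1.1, t.2)) (a, c))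
        (fun b => pm q (fun t => (t.1.2, t.2)) (b, c)) (pm q (fun t => t.2) c),
        marg_fst q c, marg_snd q c]
    rw [this]
    rcases eq_or_lt_of_le (hC c) with h | h
    · rw [← h]; simp
    · rw [mul_div_assoc, div_self h.ne', mul_one]
  calc ∑ t : (α × β) × γ, pm q (fun t => (t.1.1, t.2)) (t.1.1, t.2)
        * pm q (fun t => (t.1.2, t.2)) (t.1.2, t.2) / pm q (fun t => t.2) t.2
      = ∑ c, ∑ ab : α × β, pm q (fun t => (t.1.1, t.2)) (ab.1, c)
        * pm q (fun t => (t.1.2, t.2)) (ab.2, c) / pm q (fun t => t.2) c := by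
        rw [Fintype.sum_prod_type, Finset.sum_comm]
    _ ≤ ∑ c, pm q (fun t => t.2) c := Finset.sum_le_sum fun c _ => hfc c
    _ = 1 := by rw [pm_sum, h1]

lemma core_ineq (q : (α × β) × γ → ℝ) (h0 : ∀ t, 0 ≤ q t) (h1 : ∑ t, q t = 1) :
    0 ≤ ent (pm q fun t => (t.1.1, t.2)) + ent (pm q fun t => (t.1.2, t.2))
      - ent q - ent (pm q fun t => t.2) := by
  rw [ent_decomp q]
  have hpt : ∀ t : (α × β) × γ,
      q t - pm q (fun t => (t.1.1, t.2)) (t.1.1, t.2)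
        * pm q (fun t => (t.1.2, t.2)) (t.1.2, t.2) / pm q (fun t => t.2) t.2
      ≤ q t * (Real.log (q t) + Real.log (pm q (fun t => t.2) t.2)
        - Real.log (pm q (fun t => (t.1.1, t.2)) (t.1.1, t.2))
        - Real.log (pm q (fun t => (t.1.2, t.2)) (t.1.2, t.2))) := by
    intro t
    set A := pm q (fun t => (t.1.1, t.2)) (t.1.1, t.2) with hAdef
    set B := pm q (fun t => (t.1.2, t.2)) (t.1.2, t.2) with hBdef
    set C := pm q (fun t => t.2) t.2 with hCdef
    have hA0 : 0 ≤ A := pm_nonneg q h0 _ _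
    have hB0 : 0 ≤ B := pm_nonneg q h0 _ _
    have hC0 : 0 ≤ C := pm_nonneg q h0 _ _
    rcases eq_or_lt_of_le (h0 t) with hq | hq
    · rw [← hq]
      have : 0 ≤ A * B / C := div_nonneg (mul_nonneg hA0 hB0) hC0
      simp only [zero_mul, zero_sub]
      linarith
    · have hAq : q t ≤ A := le_pm q h0 (fun t => (t.1.1, t.2)) t
      have hBq : q t ≤ B := le_pm q h0 (fun t => (t.1.2, t.2)) t
      have hCq : q t ≤ C := le_pm q h0 (fun t => t.2) t
      have hA : 0 < A := lt_of_lt_of_le hq hAq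
      have hB : 0 < B := lt_of_lt_of_le hq hBq
      have hC : 0 < C := lt_of_lt_of_le hq hCq
      have key : Real.log (A * B / (q t * C)) ≤ A * B / (q t * C) - 1 :=
        Real.log_le_sub_one_of_pos (by positivity)
      have hlog : Real.log (q t) + Real.log C - Real.log A - Real.log B
          = -Real.log (A * B / (q t * C)) := by
        rw [Real.log_div (by positivity) (by positivity),
          Real.log_mul hA.ne' hB.ne', Real.log_mul hq.ne' hC.ne']
        ring
      rw [hlog]
      have h2 : q t * (A * B / (q t * C)) = A * B / C := by
        field_simp
      have h3 := mul_le_mul_of_nonneg_left key hq.le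
      rw [mul_sub, h2, mul_one] at h3
      linarith
  calc (0:ℝ) = 1 - 1 := by ring
    _ ≤ ∑ t, q t - ∑ t : (α × β) × γ, pm q (fun t => (t.1.1, t.2)) (t.1.1, t.2)
        * pm q (fun t => (t.1.2, t.2)) (t.1.2, t.2) / pm q (fun t => t.2) t.2 := by
        have := sum_ratio_le_one q h0 h1
        linarith [h1]
    _ = ∑ t : (α × β) × γ, (q t - pm q (fun t => (t.1.1, t.2)) (t.1.1, t.2)
        * pm q (fun t => (t.1.2, t.2)) (t.1.2, t.2) / pm q (fun t => t.2) t.2) := by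
        rw [Finset.sum_sub_distrib]
    _ ≤ _ := Finset.sum_le_sum fun t _ => hpt t

lemma core_eq (q : (α × β) × γ → ℝ) (h0 : ∀ t, 0 ≤ q t)
    (hfac : ∀ t : (α × β) × γ, q t * pm q (fun t => t.2) t.2
      = pm q (fun t => (t.1.1, t.2)) (t.1.1, t.2) * pm q (fun t => (t.1.2, t.2)) (t.1.2, t.2)) :
    ent (pm q fun t => (t.1.1, t.2)) + ent (pm q fun t => (t.1.2, t.2))
      - ent q - ent (pm q fun t => t.2) = 0 := by
  rw [ent_decomp q]
  refine Finset.sum_eq_zero fun t _ => ?_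
  rcases eq_or_lt_of_le (h0 t) with hq | hq
  · rw [← hq]; ring
  · have hAq : q t ≤ pm q (fun t => (t.1.1, t.2)) (t.1.1, t.2) := le_pm q h0 _ t
    have hBq : q t ≤ pm q (fun t => (t.1.2, t.2)) (t.1.2, t.2) := le_pm q h0 _ t
    have hCq : q t ≤ pm q (fun t => t.2) t.2 := le_pm q h0 _ t
    have hA : 0 < pm q (fun t => (t.1.1, t.2)) (t.1.1, t.2) := lt_of_lt_of_le hq hAq
    have hB : 0 < pm q (fun t => (t.1.2, t.2)) (t.1.2, t.2) := lt_of_lt_of_le hq hBq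
    have hC : 0 < pm q (fun t => t.2) t.2 := lt_of_lt_of_le hq hCq
    have : Real.log (q t) + Real.log (pm q (fun t => t.2) t.2)
        - Real.log (pm q (fun t => (t.1.1, t.2)) (t.1.1, t.2))
        - Real.log (pm q (fun t => (t.1.2, t.2)) (t.1.2, t.2)) = 0 := by
      rw [← Real.log_mul hq.ne' hC.ne', hfac t, Real.log_mul hA.ne' hB.ne']
      ring
    rw [this, mul_zero]

lemma cI_eq_core (p : Ω → ℝ) (A : Ω → α) (B : Ω → β) (C : Ω → γ) :
    cI p A B C
      = ent (pm (pm p fun ω => ((A ω, B ω), C ω)) fun t => (t.1.1, t.2))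
        + ent (pm (pm p fun ω => ((A ω, B ω), C ω)) fun t => (t.1.2, t.2))
        - ent (pm p fun ω => ((A ω, B ω), C ω))
        - ent (pm (pm p fun ω => ((A ω, B ω), C ω)) fun t => t.2) := by
  have h1 : pm p (fun ω => (A ω, C ω))
      = pm (pm p fun ω => ((A ω, B ω), C ω)) (fun t => (t.1.1, t.2)) :=
    pm_comp p (fun ω => ((A ω, B ω), C ω)) (fun t => (t.1.1, t.2))
  have h2 : pm p (fun ω => (B ω, C ω))
      = pm (pm p fun ω => ((A ω, B ω), C ω)) (fun t => (t.1.2, t.2)) :=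
    pm_comp p (fun ω => ((A ω, B ω), C ω)) (fun t => (t.1.2, t.2))
  have h3 : pm p C
      = pm (pm p fun ω => ((A ω, B ω), C ω)) (fun t => t.2) :=
    pm_comp p (fun ω => ((A ω, B ω), C ω)) (fun t => t.2)
  simp only [cI, cH, H]
  rw [h1, h2, h3]
  ring

lemma cI_nonneg (p : Ω → ℝ) (hp0 : ∀ ω, 0 ≤ p ω) (hp1 : ∑ ω, p ω = 1)
    (A : Ω → α) (B : Ω → β) (C : Ω → γ) : 0 ≤ cI p A B C := by
  rw [cI_eq_core]
  exact core_ineq _ (pm_nonneg p hp0 _) (by rw [pm_sum, hp1])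

lemma cI_eq_zero (p : Ω → ℝ) (hp0 : ∀ ω, 0 ≤ p ω)
    (A : Ω → α) (B : Ω → β) (C : Ω → γ) (h : CondIndep p A B C) :
    cI p A B C = 0 := by
  rw [cI_eq_core]
  refine core_eq _ (pm_nonneg p hp0 _) ?_
  intro t
  have h1 : pm p (fun ω => (A ω, C ω))
      = pm (pm p fun ω => ((A ω, B ω), C ω)) (fun t => (t.1.1, t.2)) :=
    pm_comp p (fun ω => ((A ω, B ω), C ω)) (fun t => (t.1.1, t.2))
  have h2 : pm p (fun ω => (B ω, C ω))
      = pm (pm p fun ω => ((A ω, B ω), C ω)) (fun t => (t.1.2, t.2)) :=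
    pm_comp p (fun ω => ((A ω, B ω), C ω)) (fun t => (t.1.2, t.2))
  have h3 : pm p C
      = pm (pm p fun ω => ((A ω, B ω), C ω)) (fun t => t.2) :=
    pm_comp p (fun ω => ((A ω, B ω), C ω)) (fun t => t.2)
  have := h t.1.1 t.1.2 t.2
  rw [← h1, ← h2, ← h3]
  simpa using this

end ITAux

open IT in
/-- If `(V₀,V₁,V₂) ↔ X ↔ Y₂` is a Markov chain, then
`I(X;Y₂∣V₀,V₁) ≥ I(V₂;Y₂∣V₀) - I(V₁;V₂∣V₀)`. -/
theorem stmt0 {Ω A0 A1 A2 AX AY : Type} [Fintype Ω]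
    [Fintype A0] [DecidableEq A0] [Fintype A1] [DecidableEq A1]
    [Fintype A2] [DecidableEq A2] [Fintype AX] [DecidableEq AX]
    [Fintype AY] [DecidableEq AY]
    (p : Ω → ℝ) (hp : IsPMF p)
    (V0 : Ω → A0) (V1 : Ω → A1) (V2 : Ω → A2) (X : Ω → AX) (Y2 : Ω → AY)
    (hMarkov : CondIndep p (fun ω => (V0 ω, V1 ω, V2 ω)) Y2 X) :
    cI p X Y2 (fun ω => (V0 ω, V1 ω)) ≥ cI p V2 Y2 V0 - cI p V1 V2 V0 := by
  obtain ⟨hp0, hp1⟩ := hp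
  have E0 : cI p (fun ω => (V0 ω, V1 ω, V2 ω)) Y2 X = 0 :=
    ITAux.cI_eq_zero p hp0 _ _ _ hMarkov
  have F1a : 0 ≤ cI p (fun ω => (V0 ω, V1 ω)) Y2 X :=
    ITAux.cI_nonneg p hp0 hp1 _ _ _
  have F2 : 0 ≤ cI p X Y2 (fun ω => (V2 ω, V0 ω, V1 ω)) :=
    ITAux.cI_nonneg p hp0 hp1 _ _ _
  have F3 : 0 ≤ cI p V2 V1 (fun ω => (V0 ω, Y2 ω)) :=
    ITAux.cI_nonneg p hp0 hp1 _ _ _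
  have R1 : H p (fun ω => ((V0 ω, V1 ω, V2 ω), X ω))
      = H p (fun ω => (X ω, (V2 ω, V0 ω, V1 ω))) :=
    ITAux.H_relabel p (fun ω => (X ω, (V2 ω, V0 ω, V1 ω)))
      (fun t => ((t.2.2.1, (t.2.2.2, t.2.1)), t.1))
      (by intro t t' h; simp [Prod.ext_iff] at h ⊢; tauto)
  have R3 : H p (fun ω => (((V0 ω, V1 ω, V2 ω), Y2 ω), X ω))
      = H p (fun ω => ((X ω, Y2 ω), (V2 ω, V0 ω, V1 ω))) :=
    ITAux.H_relabel p (fun ω => ((X ω, Y2 ω), (V2 ω, V0 ω, V1 ω)))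
      (fun t => (((t.2.2.1, (t.2.2.2, t.2.1)), t.1.2), t.1.1))
      (by intro t t' h; simp [Prod.ext_iff] at h ⊢; tauto)
  have R2 : H p (fun ω => ((V0 ω, V1 ω), X ω))
      = H p (fun ω => (X ω, (V0 ω, V1 ω))) :=
    ITAux.H_relabel p (fun ω => (X ω, (V0 ω, V1 ω)))
      (fun t => (t.2, t.1))
      (by intro t t' h; simp [Prod.ext_iff] at h ⊢; tauto)
  have R4 : H p (fun ω => (((V0 ω, V1 ω), Y2 ω), X ω))
      = H p (fun ω => ((X ω, Y2 ω), (V0 ω, V1 ω))) :=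
    ITAux.H_relabel p (fun ω => ((X ω, Y2 ω), (V0 ω, V1 ω)))
      (fun t => ((t.2, t.1.2), t.1.1))
      (by intro t t' h; simp [Prod.ext_iff] at h ⊢; tauto)
  have R7 : H p (fun ω => (Y2 ω, (V2 ω, V0 ω, V1 ω)))
      = H p (fun ω => ((V2 ω, V1 ω), (V0 ω, Y2 ω))) :=
    ITAux.H_relabel p (fun ω => ((V2 ω, V1 ω), (V0 ω, Y2 ω)))
      (fun t => (t.2.2, (t.1.1, (t.2.1, t.1.2))))
      (by intro t t' h; simp [Prod.ext_iff] at h ⊢; tauto)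
  have R8 : H p (fun ω => (V2 ω, V0 ω, V1 ω))
      = H p (fun ω => ((V1 ω, V2 ω), V0 ω)) :=
    ITAux.H_relabel p (fun ω => ((V1 ω, V2 ω), V0 ω))
      (fun t => (t.1.2, (t.2, t.1.1)))
      (by intro t t' h; simp [Prod.ext_iff] at h ⊢; tauto)
  have R9 : H p (fun ω => (V2 ω, (V0 ω, Y2 ω)))
      = H p (fun ω => ((V2 ω, Y2 ω), V0 ω)) :=
    ITAux.H_relabel p (fun ω => ((V2 ω, Y2 ω), V0 ω))
      (fun t => (t.1.1, (t.2, t.1.2)))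
      (by intro t t' h; simp [Prod.ext_iff] at h ⊢; tauto)
  have R10 : H p (fun ω => (V1 ω, (V0 ω, Y2 ω)))
      = H p (fun ω => (Y2 ω, (V0 ω, V1 ω))) :=
    ITAux.H_relabel p (fun ω => (Y2 ω, (V0 ω, V1 ω)))
      (fun t => (t.2.2, (t.2.1, t.1)))
      (by intro t t' h; simp [Prod.ext_iff] at h ⊢; tauto)
  have R11 : H p (fun ω => (V0 ω, Y2 ω))
      = H p (fun ω => (Y2 ω, V0 ω)) :=
    ITAux.H_relabel p (fun ω => (Y2 ω, V0 ω))
      (fun t => (t.2, t.1))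
      (by intro t t' h; simp [Prod.ext_iff] at h ⊢; tauto)
  have R12 : H p (fun ω => (V1 ω, V0 ω))
      = H p (fun ω => (V0 ω, V1 ω)) :=
    ITAux.H_relabel p (fun ω => (V0 ω, V1 ω))
      (fun t => (t.2, t.1))
      (by intro t t' h; simp [Prod.ext_iff] at h ⊢; tauto)
  simp only [cI, cH] at E0 F1a F2 F3 ⊢
  linarith [E0, F1a, F2, F3, R1, R2, R3, R4, R7, R8, R9, R10, R11, R12]
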